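/- There exist positive real constants C₁, C₂, C₃ such that for every complex number α with 0 < Re(α) < 1/6 and all integers n, k with 1 ≤ k < n, one has |∏_{j=1}^{k} ((e^{α/2} − e^{−α/2})² − (e^{jα/(2n)} − e^{−jα/(2n)})²)| ≤ exp(C₁ · k · log|α| + C₂ · log k + C₃). -/

import Mathlib

open Real

set_option maxHeartbeats 1000000



lemma cosh_small {s : ℝ} (hs : |s| ≤ 1/3) : Real.cosh s ≤ 1 + 0.5047 * s^2 := by
  have h1 := Real.exp_bound (x := s) (by linarith [abs_nonneg s] : |s| ≤ 1) (n := 6) (by norm_num)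
  have h2 := Real.exp_bound (x := -s) (by rw [abs_neg]; linarith [abs_nonneg s] : |(-s)| ≤ 1) (n := 6) (by norm_num)
  rw [Real.cosh_eq]
  rw [abs_sub_le_iff] at h1 h2
  obtain ⟨h1a, _⟩ := h1
  obtain ⟨h2a, _⟩ := h2
  simp only [Finset.sum_range_succ, Finset.sum_range_zero, abs_neg] at h1a h2a
  norm_num [Nat.factorial] at h1a h2a
  have hss : s^2 ≤ 1/9 := by nlinarith [sq_abs s, abs_nonneg s]
  have h6 : |s|^6 = (s^2)^3 := by rw [← sq_abs]; ring
  have h4 : (s^2)^2 ≤ 1/81 := by nlinarith [sq_nonneg s]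
  have hs6 : |s|^6 ≤ (1/81) * s^2 := by
    rw [h6]
    calc (s^2)^3 = (s^2)^2 * s^2 := by ring
    _ ≤ (1/81) * s^2 := by gcongr
  have hs4 : s^4 ≤ (1/9) * s^2 := by
    calc s^4 = s^2 * s^2 := by ring
    _ ≤ (1/9) * s^2 := by gcongr
  nlinarith [hs6, hs4]


lemma cos_ident (x y u v : ℝ) :
    (Real.cosh x * Real.cos y - Real.cosh u * Real.cos v)^2
      + (Real.sinh x * Real.sin y - Real.sinh u * Real.sin v)^2
    = (Real.cosh (x+u) - Real.cos (y+v)) * (Real.cosh (x-u) - Real.cos (y-v)) := by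
  have hX := Real.cosh_sq_sub_sinh_sq x
  have hU := Real.cosh_sq_sub_sinh_sq u
  have hY := Real.sin_sq_add_cos_sq y
  have hV := Real.sin_sq_add_cos_sq v
  rw [Real.cosh_add, Real.cosh_sub, Real.cos_add, Real.cos_sub]
  linear_combination (-(Real.sin y^2 + Real.sinh u^2)) * hX
    + (Real.sin y^2 + Real.sinh u^2) * hV
    + (Real.cosh x^2 - Real.cos v^2) * hY
    - (Real.cosh x^2 - Real.cos v^2) * hU

lemma one_sub_cos_sq (w : ℝ) : 1 - Real.cos w ≤ w^2/2 := by
  have h := Real.cos_two_mul (w/2)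
  rw [show 2*(w/2) = w by ring] at h
  have h2 : Real.sin (w/2)^2 ≤ (w/2)^2 := by
    have := Real.abs_sin_le_abs (x := w/2)
    nlinarith [sq_abs (Real.sin (w/2)), sq_abs (w/2), abs_nonneg (Real.sin (w/2)), abs_nonneg (w/2)]
  have h3 := Real.cos_sq' (w/2)
  nlinarith

lemma one_sub_cos_nu {w : ℝ} (hw : 0.694 ≤ w^2) : 1 - Real.cos w ≤ 0.4755 * w^2 := by
  rw [← Real.cos_abs]
  have hz0 : 0 ≤ |w| := abs_nonneg w
  have hzw : |w|^2 = w^2 := sq_abs w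
  set z := |w| with hzdef
  have hz : 0.833 ≤ z := by nlinarith
  have hcos : Real.cos z = 1 - 2*Real.sin (z/2)^2 := by
    have h := Real.cos_two_mul (z/2)
    rw [show 2*(z/2) = z by ring] at h
    rw [h, Real.cos_sq']; ring
  rcases le_or_gt z 2 with h2 | h2
  · -- 0.833 ≤ z ≤ 2
    set x := z/2 with hxdef
    have hx1 : 0.4165 ≤ x := by rw [hxdef]; linarith
    have hx2 : x ≤ 1 := by rw [hxdef]; linarith
    have hsb := Real.sin_bound (x := x) (by rw [abs_of_nonneg (by linarith)]; linarith)
    rw [abs_sub_le_iff, abs_of_nonneg (by linarith : (0:ℝ) ≤ x)] at hsb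
    have hsin_le : Real.sin x ≤ x - x^3/6 + x^4*(5/96) := by nlinarith [hsb.1, pow_nonneg (by linarith : (0:ℝ) ≤ x) 4, mul_le_mul_of_nonneg_left hx2 (pow_nonneg (by linarith : (0:ℝ) ≤ x) 4)]
    have hsin_nn : 0 ≤ Real.sin x := Real.sin_nonneg_of_nonneg_of_le_pi (by linarith)
      (by linarith [Real.pi_gt_three])
    have hg : x - x^3/6 + x^4*(5/96) ≤ 0.9751 * x := by nlinarith [sq_nonneg (x - 0.4165), sq_nonneg x, mul_nonneg (sub_nonneg.mpr hx1) (sub_nonneg.mpr hx2)]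
    have hsq : Real.sin x ^2 ≤ (0.9751*x)^2 := by nlinarith
    rw [hcos]
    have : z^2 = 4*x^2 := by rw [hxdef]; ring
    nlinarith
  · rcases le_or_gt z 2.06 with h3 | h3
    · -- 2 < z ≤ 2.06
      set x := z/2 with hxdef
      have hx1 : 1 ≤ x := by rw [hxdef]; linarith
      have hx2 : x ≤ 1.03 := by rw [hxdef]; linarith
      have hs1 := Real.sin_bound (x := (1:ℝ)) (by norm_num)
      rw [abs_sub_le_iff] at hs1
      have hsin1 : Real.sin 1 ≤ 85/96 := by norm_num at hs1; linarith [hs1.1]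
      have hc1 := Real.cos_bound (x := (1:ℝ)) (by norm_num)
      rw [abs_sub_le_iff] at hc1
      have hcos1 : Real.cos 1 ≤ 53/96 := by norm_num at hc1; linarith [hc1.1]
      have hxe : x = 1 + (x - 1) := by ring
      have hsplit : Real.sin x = Real.sin 1 * Real.cos (x-1) + Real.cos 1 * Real.sin (x-1) := by
        rw [hxe]; rw [Real.sin_add]; ring_nf
      have c1 : Real.cos (x-1) ≤ 1 := Real.cos_le_one _
      have s1 : Real.sin (x-1) ≤ x-1 := Real.sin_le (by linarith)
      have s1n : 0 ≤ Real.sin (x-1) := Real.sin_nonneg_of_nonneg_of_le_pi (by linarith)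
        (by linarith [Real.pi_gt_three])
      have sn : 0 ≤ Real.sin 1 := Real.sin_nonneg_of_nonneg_of_le_pi (by norm_num) (by linarith [Real.pi_gt_three])
      have cn : 0 ≤ Real.cos 1 := Real.cos_one_pos.le
      have t1 : Real.sin 1 * Real.cos (x-1) ≤ 85/96 :=
        le_trans (mul_le_of_le_one_right sn c1) hsin1
      have t2 : Real.cos 1 * Real.sin (x-1) ≤ 53/96*(x-1) :=
        mul_le_mul hcos1 s1 s1n (by norm_num)
      have hsinx : Real.sin x ≤ 85/96 + 53/96*(x-1) := by rw [hsplit]; linarith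
      have hsin_nn : 0 ≤ Real.sin x := Real.sin_nonneg_of_nonneg_of_le_pi (by linarith)
        (by linarith [Real.pi_gt_three])
      have hb : Real.sin x ≤ 0.90198 := by
        have : 85/96 + 53/96*(x-1) ≤ (0.90198:ℝ) := by nlinarith
        linarith
      have hsq : Real.sin x^2 ≤ 0.90198^2 := by nlinarith
      rw [hcos]
      have hz4 : 4 ≤ z^2 := by nlinarith
      have : (0.4755:ℝ)*4 ≤ 0.4755*z^2 := by nlinarith
      nlinarith [hsq]
    · -- z > 2.06
      have := Real.neg_one_le_cos z
      nlinarith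



lemma rpow_helper {r M A : ℝ} (hr : 0 < r) (hM : r ≤ M) (hA : 0 ≤ A)
    (hchk : A^(50:ℕ) * M ≤ 1) : A * r^4 ≤ r^((199:ℝ)/50) := by
  have hM0 : 0 < M := lt_of_lt_of_le hr hM
  have h1 : r^((199:ℝ)/50) = r^(4:ℕ) * r^(-(1:ℝ)/50) := by
    rw [← Real.rpow_natCast r 4, ← Real.rpow_add hr]; norm_num
  rw [h1]
  have hrp : 0 < r^((1:ℝ)/50) := Real.rpow_pos_of_pos hr _
  have h3 : r^((1:ℝ)/50) ≤ M^((1:ℝ)/50) := Real.rpow_le_rpow hr.le hM (by norm_num)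
  have h4 : A * M^((1:ℝ)/50) ≤ 1 := by
    have h5 : (A * M^((1:ℝ)/50))^(50:ℕ) ≤ (1:ℝ)^(50:ℕ) := by
      rw [mul_pow, ← Real.rpow_natCast (M^((1:ℝ)/50)) 50, ← Real.rpow_mul hM0.le]
      norm_num
      exact hchk
    exact le_of_pow_le_pow_left₀ (by norm_num) (by norm_num) h5
  have h6 : A * r^((1:ℝ)/50) ≤ 1 := by
    calc A * r^((1:ℝ)/50) ≤ A * M^((1:ℝ)/50) := by gcongr
    _ ≤ 1 := h4
  have h2 : A ≤ r^(-(1:ℝ)/50) := by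
    rw [show -(1:ℝ)/50 = -((1:ℝ)/50) by norm_num, Real.rpow_neg hr.le, ← one_div,
      le_div_iff₀ hrp]
    exact h6
  calc A * r^4 ≤ r^(-(1:ℝ)/50) * r^4 := by
        have := pow_nonneg hr.le 4
        nlinarith
  _ = r^(4:ℕ) * r^(-(1:ℝ)/50) := by push_cast; ring

lemma rpow_big {r : ℝ} (hr : 2.03 ≤ r) : 4.0561 ≤ r^((199:ℝ)/100) := by
  have h1 : (2.03:ℝ)^((199:ℝ)/100) ≤ r^((199:ℝ)/100) :=
    Real.rpow_le_rpow (by norm_num) hr (by norm_num)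
  have h2 : (4.0561:ℝ) ≤ (2.03:ℝ)^((199:ℝ)/100) := by
    have h5 : ((4.0561:ℝ))^(100:ℕ) ≤ ((2.03:ℝ)^((199:ℝ)/100))^(100:ℕ) := by
      rw [← Real.rpow_natCast ((2.03:ℝ)^((199:ℝ)/100)) 100, ← Real.rpow_mul (by norm_num)]
      norm_num
    exact le_of_pow_le_pow_left₀ (by norm_num) (Real.rpow_nonneg (by norm_num) _) h5
  linarith




lemma tsq_le {t x : ℝ} (ht0 : 0 ≤ t) (ht1 : t ≤ 1) : (t*x)^2 ≤ x^2 := by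
  nlinarith [mul_le_one₀ ht1 ht0 ht1, sq_nonneg x, sq_nonneg (t*x)]

lemma coshcos_base {c x y : ℝ} (hc : |c*x| ≤ 1/3) :
    Real.cosh (c*x) - Real.cos (c*y) ≤ c^2/2 * (1.0094*x^2 + y^2) := by
  have h1 := cosh_small hc
  have h2 := one_sub_cos_sq (c*y)
  nlinarith [sq_nonneg (c*x)]

lemma coshcos_nu {c x y : ℝ} (hc : |c*x| ≤ 1/3) (hb : 0.694 ≤ (c*y)^2) :
    Real.cosh (c*x) - Real.cos (c*y) ≤ c^2/2 * (1.0094*x^2 + 0.951*y^2) := by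
  have h1 := cosh_small hc
  have h2 := one_sub_cos_nu hb
  nlinarith [sq_nonneg (c*x)]

lemma prod_bound {t B1 B2 P Q : ℝ} (ht0 : 0 ≤ t) (ht1 : t ≤ 1) (hB2nn : 0 ≤ B2)
    (hB1 : B1 ≤ (1+t)^2/2 * P) (hB2 : B2 ≤ (1-t)^2/2 * Q) (hPnn : 0 ≤ P) (hQnn : 0 ≤ Q) :
    4*(B1*B2) ≤ P*Q := by
  have hP1nn : 0 ≤ (1+t)^2/2*P := by positivity
  have hm := mul_le_mul hB1 hB2 hB2nn hP1nn
  have ht2 : (1-t^2)^2 ≤ 1 := by nlinarith [mul_le_one₀ ht1 ht0 ht1, sq_nonneg t]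
  nlinarith [mul_le_mul_of_nonneg_right ht2 (mul_nonneg hPnn hQnn)]

lemma caseC_key {x y : ℝ} (hxs : x^2 ≤ 1/36) (hy2 : 0.694 ≤ y^2) :
    (1.0094*x^2 + 0.951*y^2) * (1.0094*x^2 + y^2) ≤ 0.9859*(x^2+y^2)^2 := by
  nlinarith [sq_nonneg x, sq_nonneg y, sq_nonneg (x*y), mul_nonneg (sq_nonneg x) (sq_nonneg y)]

lemma key_factor (α : ℂ) (hx0 : 0 < α.re) (hx6 : α.re < 1/6) (t : ℝ) (ht0 : 0 ≤ t) (ht1 : t ≤ 1) :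
    ‖(Complex.exp α + Complex.exp (-α) - Complex.exp ((t:ℂ)*α)
        - Complex.exp (-((t:ℂ)*α)))‖
      ≤ ‖α‖ ^ ((199:ℝ)/100) := by
  set x := α.re with hxdef
  set y := α.im with hydef
  set F : ℂ := Complex.exp α + Complex.exp (-α) - Complex.exp ((t:ℂ)*α)
        - Complex.exp (-((t:ℂ)*α)) with hFdef
  set r : ℝ := ‖α‖ with hrdef
  clear_value x y F r
  have hα0 : α ≠ 0 := by
    intro h
    rw [hxdef, h] at hx0; simp at hx0
  have hr : 0 < r := by rw [hrdef]; exact (norm_pos_iff.mpr hα0)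
  have hr2 : r^2 = x^2 + y^2 := by
    rw [hrdef, Complex.sq_norm, Complex.normSq_apply, hxdef, hydef]; ring
  have htre : ((t:ℂ)*α).re = t*x := by rw [hxdef]; simp [Complex.mul_re]
  have htim : ((t:ℂ)*α).im = t*y := by rw [hydef]; simp [Complex.mul_im]
  have hFre : F.re = 2*Real.cosh x*Real.cos y - 2*Real.cosh (t*x)*Real.cos (t*y) := by
    rw [hFdef]
    simp [Complex.exp_re, Complex.add_re, Complex.sub_re, Complex.neg_re, Complex.neg_im,
      htre, htim, Real.cos_neg, Real.cosh_eq, ← hxdef, ← hydef]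
    ring
  have hFim : F.im = 2*Real.sinh x*Real.sin y - 2*Real.sinh (t*x)*Real.sin (t*y) := by
    rw [hFdef]
    simp [Complex.exp_im, Complex.add_im, Complex.sub_im, Complex.neg_re, Complex.neg_im,
      htre, htim, Real.sin_neg, Real.sinh_eq, ← hxdef, ← hydef]
    ring
  have habs2 : ‖F‖^2 =
      4*((Real.cosh ((1+t)*x) - Real.cos ((1+t)*y)) * (Real.cosh ((1-t)*x) - Real.cos ((1-t)*y))) := by
    rw [Complex.sq_norm, Complex.normSq_apply, hFre, hFim]
    have hid := cos_ident x y (t*x) (t*y)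
    rw [show (1+t)*x = x + t*x by ring, show (1+t)*y = y + t*y by ring,
      show (1-t)*x = x - t*x by ring, show (1-t)*y = y - t*y by ring]
    linear_combination 4*hid
  clear hFre hFim
  have hxpos : 0 < x := hx0
  have hxs : x^2 ≤ 1/36 := by nlinarith
  have ha_abs : |(1+t)*x| ≤ 1/3 := by
    rw [abs_of_nonneg (by nlinarith)]; nlinarith
  have hc_abs : |(1-t)*x| ≤ 1/3 := by
    rw [abs_of_nonneg (by nlinarith)]; nlinarith
  have hB2nn : 0 ≤ Real.cosh ((1-t)*x) - Real.cos ((1-t)*y) := by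
    have := Real.one_le_cosh ((1-t)*x); have := Real.cos_le_one ((1-t)*y); linarith
  have hB1 := coshcos_base (c := 1+t) (x := x) (y := y) ha_abs
  have hB2 := coshcos_base (c := 1-t) (x := x) (y := y) hc_abs
  have hPnn : (0:ℝ) ≤ 1.0094*x^2 + y^2 := by positivity
  have hprod : ‖F‖^2 ≤ (1.0094*x^2 + y^2)^2 := by
    rw [habs2]
    have := prod_bound ht0 ht1 hB2nn hB1 hB2 hPnn hPnn
    nlinarith [this]
  have hgoal2 : ‖F‖^2 ≤ r^((199:ℝ)/50) →
      ‖F‖ ≤ r^((199:ℝ)/100) := by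
    intro h
    have hrsq : (r^((199:ℝ)/100))^(2:ℕ) = r^((199:ℝ)/50) := by
      rw [← Real.rpow_natCast (r^((199:ℝ)/100)) 2, ← Real.rpow_mul hr.le]; norm_num
    refine le_of_pow_le_pow_left₀ (n := 2) (by norm_num) (Real.rpow_nonneg hr.le _) ?_
    rw [hrsq]; exact h
  rcases le_or_gt r 0.38 with hA1 | h1
  · apply hgoal2
    have h : ‖F‖^2 ≤ (1.0094:ℝ)^2 * r^4 := by
      have h0 : 1.0094*x^2 + y^2 ≤ 1.0094*r^2 := by nlinarith
      have h1 : (1.0094*x^2 + y^2)^2 ≤ (1.0094*r^2)^2 :=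
        pow_le_pow_left₀ hPnn h0 2
      calc ‖F‖^2 ≤ (1.0094*x^2 + y^2)^2 := hprod
      _ ≤ (1.0094*r^2)^2 := h1
      _ = (1.0094:ℝ)^2 * r^4 := by ring
    refine le_trans h (rpow_helper hr hA1 (by norm_num) (by norm_num))
  rcases le_or_gt r 0.6 with hA2 | h2
  · apply hgoal2
    have h : ‖F‖^2 ≤ (1.0019:ℝ)^2 * r^4 := by
      have hr4 : (0.38:ℝ)^2 ≤ r^2 := pow_le_pow_left₀ (by norm_num) h1.le 2
      have hb : 1.0094*x^2 + y^2 ≤ 1.0019*r^2 := by nlinarith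
      have hbb : (1.0094*x^2 + y^2)^2 ≤ (1.0019*r^2)^2 :=
        pow_le_pow_left₀ hPnn hb 2
      calc ‖F‖^2 ≤ (1.0094*x^2 + y^2)^2 := hprod
      _ ≤ (1.0019*r^2)^2 := hbb
      _ = (1.0019:ℝ)^2 * r^4 := by ring
    refine le_trans h (rpow_helper hr hA2 (by norm_num) (by norm_num))
  rcases le_or_gt r 0.85 with hA3 | h3
  · apply hgoal2
    have h : ‖F‖^2 ≤ (1.00073:ℝ)^2 * r^4 := by
      have hr4 : (0.6:ℝ)^2 ≤ r^2 := pow_le_pow_left₀ (by norm_num) h2.le 2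
      have hb : 1.0094*x^2 + y^2 ≤ 1.00073*r^2 := by nlinarith
      have hbb : (1.0094*x^2 + y^2)^2 ≤ (1.00073*r^2)^2 :=
        pow_le_pow_left₀ hPnn hb 2
      calc ‖F‖^2 ≤ (1.0094*x^2 + y^2)^2 := hprod
      _ ≤ (1.00073*r^2)^2 := hbb
      _ = (1.00073:ℝ)^2 * r^4 := by ring
    refine le_trans h (rpow_helper hr hA3 (by norm_num) (by norm_num))
  rcases le_or_gt r 2.03 with hC | hB
  · apply hgoal2
    have hr85 : (0.85:ℝ)^2 ≤ r^2 := pow_le_pow_left₀ (by norm_num) h3.le 2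
    have hy2 : 0.694 ≤ y^2 := by nlinarith
    have hb2 : 0.694 ≤ ((1+t)*y)^2 := by nlinarith [sq_nonneg (t*y), sq_nonneg y]
    have hB1' := coshcos_nu (c := 1+t) (x := x) (y := y) ha_abs hb2
    have hP'nn : (0:ℝ) ≤ 1.0094*x^2 + 0.951*y^2 := by positivity
    have hprod' : ‖F‖^2 ≤ (1.0094*x^2 + 0.951*y^2) * (1.0094*x^2 + y^2) := by
      rw [habs2]
      exact prod_bound ht0 ht1 hB2nn hB1' hB2 hP'nn hPnn
    have h : ‖F‖^2 ≤ (0.9859:ℝ) * r^4 := by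
      have hkey := caseC_key hxs hy2
      have hr4 : r^4 = (x^2+y^2)^2 := by rw [show r^4 = (r^2)^2 by ring, hr2]
      rw [hr4]
      linarith
    refine le_trans h (rpow_helper hr hC (by norm_num) (by norm_num))
  · have htri : ‖F‖ ≤ Real.exp x + Real.exp (-x) + Real.exp (t*x) + Real.exp (-(t*x)) := by
      rw [hFdef]
      calc ‖(Complex.exp α + Complex.exp (-α) - Complex.exp ((t:ℂ)*α) - Complex.exp (-((t:ℂ)*α)))‖
          = ‖Complex.exp α + Complex.exp (-α) - Complex.exp ((t:ℂ)*α) - Complex.exp (-((t:ℂ)*α))‖ := rfl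
        _ ≤ ‖Complex.exp α + Complex.exp (-α) - Complex.exp ((t:ℂ)*α)‖ + ‖Complex.exp (-((t:ℂ)*α))‖ := norm_sub_le _ _
        _ ≤ (‖Complex.exp α + Complex.exp (-α)‖ + ‖Complex.exp ((t:ℂ)*α)‖) + ‖Complex.exp (-((t:ℂ)*α))‖ := by
              gcongr; exact norm_sub_le _ _
        _ ≤ ((‖Complex.exp α‖ + ‖Complex.exp (-α)‖) + ‖Complex.exp ((t:ℂ)*α)‖) + ‖Complex.exp (-((t:ℂ)*α))‖ := by
              gcongr; exact norm_add_le _ _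
        _ = Real.exp x + Real.exp (-x) + Real.exp (t*x) + Real.exp (-(t*x)) := by
              simp [Complex.norm_exp, htre, Complex.neg_re, ← hxdef]
    have hcosh1 : Real.exp x + Real.exp (-x) ≤ 2 + 1.0094*x^2 := by
      have := cosh_small (s := x) (by rw [abs_of_nonneg hxpos.le]; nlinarith)
      rw [Real.cosh_eq] at this; linarith
    have hcosh2 : Real.exp (t*x) + Real.exp (-(t*x)) ≤ 2 + 1.0094*x^2 := by
      have h := cosh_small (s := t*x) (by rw [abs_of_nonneg (by nlinarith)]; nlinarith)
      rw [Real.cosh_eq] at h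
      have htx2 : (t*x)^2 ≤ x^2 := tsq_le ht0 ht1
      linarith
    have hF41 : ‖F‖ ≤ 4.0561 := by linarith
    exact le_trans hF41 (rpow_big hB.le)

lemma sq_diff_exp (z : ℂ) : (Complex.exp z - Complex.exp (-z))^2
    = Complex.exp (2*z) + Complex.exp (-(2*z)) - 2 := by
  have h1 : Complex.exp z * Complex.exp (-z) = 1 := by
    rw [← Complex.exp_add]; simp
  have h2 : Complex.exp z * Complex.exp z = Complex.exp (2*z) := by
    rw [← Complex.exp_add]; ring_nf
  have h3 : Complex.exp (-z) * Complex.exp (-z) = Complex.exp (-(2*z)) := by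
    rw [← Complex.exp_add]; ring_nf
  calc (Complex.exp z - Complex.exp (-z))^2
      = Complex.exp z * Complex.exp z - 2*(Complex.exp z * Complex.exp (-z))
        + Complex.exp (-z) * Complex.exp (-z) := by ring
  _ = Complex.exp (2*z) + Complex.exp (-(2*z)) - 2 := by rw [h1, h2, h3]; ring

/-- The evaluation of the cyclotomic kernel `C_{n,k}` at `q = e^{α/n}`:
`K(n,k,α) = ∏_{j=1}^{k} ((e^{α/2} − e^{−α/2})² − (e^{jα/(2n)} − e^{−jα/(2n)})²)`. -/
noncomputable def cycKer (n k : ℕ) (α : ℂ) : ℂ :=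
  ∏ j ∈ Finset.Icc 1 k,
    ((Complex.exp (α / 2) - Complex.exp (-α / 2)) ^ 2
      - (Complex.exp ((j : ℂ) * α / (2 * n)) - Complex.exp (-((j : ℂ) * α / (2 * n)))) ^ 2)

/-- There exist positive constants `C₁, C₂, C₃` such that for every complex `α`
with `0 < Re α < 1/6` and integers `1 ≤ k < n`,
`|K(n,k,α)| ≤ exp(C₁ k log|α| + C₂ log k + C₃)`. -/
theorem cyclotomic_kernel_estimate :
    ∃ C₁ C₂ C₃ : ℝ, 0 < C₁ ∧ 0 < C₂ ∧ 0 < C₃ ∧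
      ∀ α : ℂ, 0 < α.re → α.re < 1 / 6 → ∀ n k : ℕ, 1 ≤ k → k < n →
        ‖cycKer n k α‖ ≤
          Real.exp (C₁ * k * Real.log ‖α‖ + C₂ * Real.log k + C₃) := by
  refine ⟨199/100, 1, 1, by norm_num, by norm_num, by norm_num, ?_⟩
  intro α h0 h6 n k hk hkn
  have hα0 : α ≠ 0 := by
    intro h; rw [h] at h0; simp at h0
  have hr : 0 < ‖α‖ := norm_pos_iff.mpr hα0
  have hn0 : (n:ℂ) ≠ 0 := by
    have : 0 < n := lt_of_le_of_lt (Nat.zero_le k) hkn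
    exact_mod_cast Nat.cast_ne_zero.mpr this.ne'
  -- bound each factor
  have hfac : ∀ j ∈ Finset.Icc 1 k,
      ‖((Complex.exp (α / 2) - Complex.exp (-α / 2)) ^ 2
        - (Complex.exp ((j : ℂ) * α / (2 * n)) - Complex.exp (-((j : ℂ) * α / (2 * n)))) ^ 2)‖
      ≤ ‖α‖ ^ ((199:ℝ)/100) := by
    intro j hj
    rw [Finset.mem_Icc] at hj
    have hjn : j < n := lt_of_le_of_lt hj.2 hkn
    set t : ℝ := (j:ℝ)/(n:ℝ) with htdef
    have hnpos : (0:ℝ) < n := by exact_mod_cast lt_of_le_of_lt (Nat.zero_le k) hkn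
    have ht0 : 0 ≤ t := by positivity
    have ht1 : t ≤ 1 := by
      rw [htdef, div_le_one hnpos]
      exact_mod_cast hjn.le
    have htc : ((t:ℝ):ℂ) * α = (j:ℂ)*α/(n:ℂ) := by
      rw [htdef]
      push_cast
      field_simp
    have he1 : (Complex.exp (α / 2) - Complex.exp (-α / 2))^2
        = Complex.exp α + Complex.exp (-α) - 2 := by
      rw [show -α/2 = -(α/2) by ring, sq_diff_exp (α/2), show 2*(α/2) = α by ring]
    have he2 : (Complex.exp ((j : ℂ) * α / (2 * n)) - Complex.exp (-((j : ℂ) * α / (2 * n))))^2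
        = Complex.exp ((t:ℂ)*α) + Complex.exp (-((t:ℂ)*α)) - 2 := by
      rw [sq_diff_exp ((j : ℂ) * α / (2 * n)), htc,
        show 2*((j : ℂ) * α / (2 * n)) = (j:ℂ)*α/(n:ℂ) by field_simp]
    rw [he1, he2, show Complex.exp α + Complex.exp (-α) - 2
        - (Complex.exp ((t:ℂ)*α) + Complex.exp (-((t:ℂ)*α)) - 2)
      = Complex.exp α + Complex.exp (-α) - Complex.exp ((t:ℂ)*α) - Complex.exp (-((t:ℂ)*α)) by ring]
    exact key_factor α h0 h6 t ht0 ht1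
  have habs : ‖cycKer n k α‖ ≤ (‖α‖ ^ ((199:ℝ)/100))^k := by
    rw [cycKer, norm_prod]
    calc ∏ j ∈ Finset.Icc 1 k, ‖_‖ ≤ ∏ j ∈ Finset.Icc 1 k, ‖α‖ ^ ((199:ℝ)/100) :=
          Finset.prod_le_prod (fun j _ => norm_nonneg _) hfac
    _ = (‖α‖ ^ ((199:ℝ)/100))^k := by
          rw [Finset.prod_const, Nat.card_Icc]; norm_num
  refine le_trans habs ?_
  have heq : (‖α‖ ^ ((199:ℝ)/100))^k
      = Real.exp ((199:ℝ)/100 * k * Real.log ‖α‖) := by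
    rw [← Real.rpow_natCast (‖α‖ ^ ((199:ℝ)/100)) k, ← Real.rpow_mul hr.le,
      Real.rpow_def_of_pos hr]
    ring_nf
  rw [heq, Real.exp_le_exp]
  have hlogk : 0 ≤ Real.log k := Real.log_nonneg (by exact_mod_cast hk)
  linarith
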